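/- In a prediction space in which all cumulative distribution functions in the class 𝓕 (containing F almost surely) are continuous and strictly increasing on a shared support interval, in which there is a countable set 𝓖 ⊆ 𝓕 with Q(F ∈ 𝓖) = 1, and in which Assumption (T) holds for all quantile and threshold non-exceedance functionals, CEP calibration, quantile calibration, and threshold calibration of the predictive distribution F are all equivalent, and each implies both probabilistic and marginal calibration of F. -/

import Mathlib

open MeasureTheory ProbabilityTheory

noncomputable section

/-- The cumulative distribution function of a measure `G` on `ℝ`, evaluated at `y`. -/
def cdfAt (G : Measure ℝ) (y : ℝ) : ℝ := (G (Set.Iic y)).toReal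

/-- The left limit `G(y−)` of the CDF of `G` at `y`. -/
def cdfLt (G : Measure ℝ) (y : ℝ) : ℝ := (G (Set.Iio y)).toReal

/-- The lower `α`-quantile `q_α^-(G) = inf {x : G(x) ≥ α}`. -/
def lowerQuantile (G : Measure ℝ) (α : ℝ) : ℝ := sInf {x : ℝ | α ≤ cdfAt G x}

/-- The upper `α`-quantile `q_α^+(G) = sup {x : G(x−) ≤ α}`. -/
def upperQuantile (G : Measure ℝ) (α : ℝ) : ℝ := sSup {x : ℝ | cdfLt G x ≤ α}

variable {Ω : Type*} [MeasurableSpace Ω]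

/-- The (randomized) probability integral transform `Z_F = F(Y−) + U (F(Y) − F(Y−))`. -/
def PIT (F : Ω → Measure ℝ) (Y U : Ω → ℝ) (ω : Ω) : ℝ :=
  cdfLt (F ω) (Y ω) + U ω * (cdfAt (F ω) (Y ω) - cdfLt (F ω) (Y ω))

/-- The uniform distribution on `[0,1]`. -/
def unif01 : Measure ℝ := volume.restrict (Set.Icc (0:ℝ) 1)

/-- A prediction space: a probability space carrying a random probability measure `F` on `ℝ`
(the predictive distribution), an outcome `Y`, and a uniform random variable `U` that is
independent of the σ-algebra generated by `F` and `Y`. -/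
structure IsPredictionSpace (μ : Measure Ω) (F : Ω → Measure ℝ) (Y U : Ω → ℝ) : Prop where
  isProb : IsProbabilityMeasure μ
  probF : ∀ ω, IsProbabilityMeasure (F ω)
  measF : Measurable F
  measY : Measurable Y
  measU : Measurable U
  unifU : μ.map U = unif01
  indepU : Indep (MeasurableSpace.comap U inferInstance)
    (MeasurableSpace.comap F inferInstance ⊔ MeasurableSpace.comap Y inferInstance) μ

/-- `F` is auto-calibrated: `F(y) = Q(Y ≤ y | σ(F))` a.s. for every `y`. -/
def AutoCalibrated (μ : Measure Ω) (F : Ω → Measure ℝ) (Y : Ω → ℝ) : Prop :=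
  ∀ y : ℝ, (fun ω => cdfAt (F ω) y)
    =ᵐ[μ] μ[Set.indicator {ω | Y ω ≤ y} (fun _ => (1:ℝ)) | MeasurableSpace.comap F inferInstance]

/-- `F` is probabilistically calibrated: the PIT is uniform on `[0,1]`. -/
def ProbCalibrated (μ : Measure Ω) (F : Ω → Measure ℝ) (Y U : Ω → ℝ) : Prop :=
  μ.map (PIT F Y U) = unif01

/-- `F` is marginally calibrated: `E[F(y)] = Q(Y ≤ y)` for every `y`. -/
def MargCalibrated (μ : Measure Ω) (F : Ω → Measure ℝ) (Y : Ω → ℝ) : Prop :=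
  ∀ y : ℝ, ∫ ω, cdfAt (F ω) y ∂μ = (μ {ω | Y ω ≤ y}).toReal

/-- `F` is CEP calibrated: `Q(Z_F ≤ α | q_α^-(F)) = α` a.s. for every `α ∈ (0,1)`. -/
def CEPCalibrated (μ : Measure Ω) (F : Ω → Measure ℝ) (Y U : Ω → ℝ) : Prop :=
  ∀ α ∈ Set.Ioo (0:ℝ) 1,
    μ[Set.indicator {ω | PIT F Y U ω ≤ α} (fun _ => (1:ℝ)) |
      MeasurableSpace.comap (fun ω => lowerQuantile (F ω) α) inferInstance]
      =ᵐ[μ] fun _ => α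

/-- `F` is threshold calibrated: `Q(Y ≤ t | F(t)) = F(t)` a.s. for every `t`. -/
def ThreshCalibrated (μ : Measure Ω) (F : Ω → Measure ℝ) (Y : Ω → ℝ) : Prop :=
  ∀ t : ℝ,
    μ[Set.indicator {ω | Y ω ≤ t} (fun _ => (1:ℝ)) |
      MeasurableSpace.comap (fun ω => cdfAt (F ω) t) inferInstance]
      =ᵐ[μ] fun ω => cdfAt (F ω) t

/-- An identification function: measurable, increasing and left-continuous in its
first argument. -/
structure IsIdentificationFunction (V : ℝ → ℝ → ℝ) : Prop where
  meas : Measurable (Function.uncurry V)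
  mono : ∀ y : ℝ, Monotone fun x => V x y
  leftCont : ∀ y x : ℝ, ContinuousWithinAt (fun x => V x y) (Set.Iic x) x

/-- Lower bound `T^-(G) = sup {x : ∫ V(x,y) dG(y) < 0}` of the functional induced by `V`. -/
def Tminus (V : ℝ → ℝ → ℝ) (G : Measure ℝ) : ℝ := sSup {x : ℝ | ∫ y, V x y ∂G < 0}

/-- Upper bound `T^+(G) = inf {x : ∫ V(x,y) dG(y) > 0}` of the functional induced by `V`. -/
def Tplus (V : ℝ → ℝ → ℝ) (G : Measure ℝ) : ℝ := sInf {x : ℝ | 0 < ∫ y, V x y ∂G}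

/-- `V` is of prediction error form `V(x,y) = v(x−y)`. -/
def PredErrorForm (V : ℝ → ℝ → ℝ) : Prop :=
  ∃ v : ℝ → ℝ, Monotone v ∧ (∀ x : ℝ, ContinuousWithinAt v (Set.Iic x) x) ∧
    (∃ r : ℝ, 0 < r ∧ v (-r) < 0 ∧ 0 < v r) ∧ ∀ x y : ℝ, V x y = v (x - y)

/-- `V` is of the form `V(x,y) = x − T(δ_y)` for a singleton-valued functional `T`. -/
def DiracSingletonForm (V : ℝ → ℝ → ℝ) : Prop :=
  (∀ y : ℝ, Tminus V (Measure.dirac y) = Tplus V (Measure.dirac y)) ∧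
  ∀ x y : ℝ, V x y = x - Tminus V (Measure.dirac y)

/-- Assumption (V): `V` induces the functional on a convex class `𝓕₀ ⊇ 𝓕` of probability
measures containing all Dirac measures, and `V` is of prediction error form or of the
form `V(x,y) = x − T(δ_y)` for a singleton-valued `T`. -/
structure AssumptionV (V : ℝ → ℝ → ℝ) (𝓕 : Set (Measure ℝ)) : Prop where
  inducing : ∃ 𝓕₀ : Set (Measure ℝ), 𝓕 ⊆ 𝓕₀ ∧ (∀ G ∈ 𝓕₀, IsProbabilityMeasure G) ∧
    (∀ y : ℝ, Measure.dirac y ∈ 𝓕₀) ∧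
    (∀ G₁ ∈ 𝓕₀, ∀ G₂ ∈ 𝓕₀, ∀ p : ℝ, 0 ≤ p → p ≤ 1 →
      ENNReal.ofReal p • G₁ + ENNReal.ofReal (1 - p) • G₂ ∈ 𝓕₀) ∧
    ∀ G ∈ 𝓕₀, ∀ x : ℝ, Integrable (fun y => V x y) G
  form : PredErrorForm V ∨ DiracSingletonForm V

/-- The pair `(T^-(F), T^+(F))` of the interval-valued functional applied to the
random predictive distribution. -/
def TpairOf (V : ℝ → ℝ → ℝ) (F : Ω → Measure ℝ) (ω : Ω) : ℝ × ℝ :=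
  (Tminus V (F ω), Tplus V (F ω))

/-- Conditional `T`-calibration of the predictive distribution `F`:
`T(L(Y | T(F))) = T(F)` almost surely. -/
def CondTCalibrated (μ : Measure Ω) [IsFiniteMeasure μ] (V : ℝ → ℝ → ℝ)
    (F : Ω → Measure ℝ) (Y : Ω → ℝ) : Prop :=
  ∀ᵐ ω ∂μ,
    Tminus V (condDistrib Y (TpairOf V F) μ (TpairOf V F ω)) = Tminus V (F ω) ∧
    Tplus V (condDistrib Y (TpairOf V F) μ (TpairOf V F ω)) = Tplus V (F ω)

/-- Unconditional `T`-calibration of the predictive distribution `F`. -/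
def UncondTCalibrated (μ : Measure Ω) (V : ℝ → ℝ → ℝ)
    (F : Ω → Measure ℝ) (Y : Ω → ℝ) : Prop :=
  ∀ ε : ℝ, 0 < ε →
    (∫ ω, V (Tplus V (F ω) - ε) (Y ω) ∂μ) ≤ 0 ∧
    0 ≤ ∫ ω, V (Tminus V (F ω) + ε) (Y ω) ∂μ

/-- Unconditional `T`-calibration of a single-valued point forecast `X`. -/
def UncondCalibratedPt (μ : Measure Ω) (V : ℝ → ℝ → ℝ) (X Y : Ω → ℝ) : Prop :=
  ∀ ε : ℝ, 0 < ε →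
    (∫ ω, V (X ω - ε) (Y ω) ∂μ) ≤ 0 ∧ 0 ≤ ∫ ω, V (X ω + ε) (Y ω) ∂μ

/-- The sets defining `T^-(G)` and `T^+(G)` are nonempty and bounded, so that the induced
functional is well defined and finite at `G`. -/
def TWellDefined (V : ℝ → ℝ → ℝ) (G : Measure ℝ) : Prop :=
  {x : ℝ | ∫ y, V x y ∂G < 0}.Nonempty ∧ BddAbove {x : ℝ | ∫ y, V x y ∂G < 0} ∧
  {x : ℝ | 0 < ∫ y, V x y ∂G}.Nonempty ∧ BddBelow {x : ℝ | 0 < ∫ y, V x y ∂G}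

/-- The elementary loss `S_η(x,y) = (1{η ≤ x} − 1{η ≤ y}) V(η,y)`. -/
def elemLoss (V : ℝ → ℝ → ℝ) (η x y : ℝ) : ℝ :=
  ((if η ≤ x then (1:ℝ) else 0) - if η ≤ y then (1:ℝ) else 0) * V η y

/-- `S` has mixture (Choquet) form with respect to the identification function `V`. -/
def MixtureForm (V S : ℝ → ℝ → ℝ) : Prop :=
  ∃ H : Measure ℝ, IsLocallyFiniteMeasure H ∧
    ∀ x y : ℝ, S x y = ∫ η, elemLoss V η x y ∂H

/-- `S` is a canonical loss for the functional induced by `V`. -/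
def IsCanonicalLoss (V S : ℝ → ℝ → ℝ) : Prop :=
  (∀ x y : ℝ, 0 ≤ S x y) ∧
  ∃ a : ℝ, 0 < a ∧ ∃ b : ℝ → ℝ, Measurable b ∧
    ∀ x y : ℝ, S x y = a * (∫ η, elemLoss V η x y) + b y

/-- `S` is a consistent scoring function for the functional induced by `V` on the class `𝓕`. -/
def ConsistentFor (S V : ℝ → ℝ → ℝ) (𝓕 : Set (Measure ℝ)) : Prop :=
  ∀ G ∈ 𝓕, ∀ t ∈ Set.Icc (Tminus V G) (Tplus V G), ∀ x : ℝ,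
    ∫ y, S t y ∂G ≤ ∫ y, S x y ∂G

/-- `S` is a strictly consistent scoring function for the functional induced by `V` on `𝓕`. -/
def StrictlyConsistentFor (S V : ℝ → ℝ → ℝ) (𝓕 : Set (Measure ℝ)) : Prop :=
  ConsistentFor S V 𝓕 ∧
  ∀ G ∈ 𝓕, ∀ t ∈ Set.Icc (Tminus V G) (Tplus V G), ∀ x : ℝ,
    x ∉ Set.Icc (Tminus V G) (Tplus V G) → ∫ y, S t y ∂G < ∫ y, S x y ∂G

/-- The empirical distribution of the outcomes `y i`, `i ∈ s`. -/
def empOn {n : ℕ} (y : Fin n → ℝ) (s : Finset (Fin n)) : Measure ℝ :=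
  (s.card : ENNReal)⁻¹ • ∑ i ∈ s, Measure.dirac (y i)

/-- A locally bounded real function of a real variable. -/
def LocallyBdd (f : ℝ → ℝ) : Prop :=
  ∀ η₀ : ℝ, ∃ ε : ℝ, 0 < ε ∧ ∃ C : ℝ, ∀ η : ℝ, |η - η₀| < ε → |f η| ≤ C

/-- All CDFs in the class `𝓕` are continuous and strictly increasing on a shared
support interval. -/
def CSI (𝓕 : Set (Measure ℝ)) : Prop :=
  ∃ S : Set ℝ, S.Nonempty ∧ S.OrdConnected ∧ ∀ G ∈ 𝓕,
    Continuous (cdfAt G) ∧ StrictMonoOn (cdfAt G) S ∧ G Sᶜ = 0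

/-- The conditioning variable for quantile calibration at level `α`: the interval of
`α`-quantiles, represented by its endpoints. -/
def qPairOf (F : Ω → Measure ℝ) (α : ℝ) (ω : Ω) : ℝ × ℝ :=
  (lowerQuantile (F ω) α, upperQuantile (F ω) α)

/-- `F` is quantile calibrated: for every `α ∈ (0,1)`,
`q_α(L(Y | q_α(F))) = q_α(F)` almost surely. -/
def QuantileCalibrated (μ : Measure Ω) [IsFiniteMeasure μ]
    (F : Ω → Measure ℝ) (Y : Ω → ℝ) : Prop :=
  ∀ α ∈ Set.Ioo (0:ℝ) 1, ∀ᵐ ω ∂μ,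
    lowerQuantile (condDistrib Y (qPairOf F α) μ (qPairOf F α ω)) α
      = lowerQuantile (F ω) α ∧
    upperQuantile (condDistrib Y (qPairOf F α) μ (qPairOf F α ω)) α
      = upperQuantile (F ω) α


open Set Filter Topology

section analytic
variable {G : Measure ℝ} [IsProbabilityMeasure G] {S : Set ℝ} {α : ℝ}

lemma cdfAt_eq_cdf (G : Measure ℝ) [IsProbabilityMeasure G] : cdfAt G = ⇑(cdf G) := by
  ext x; rw [cdf_eq_real]; rfl

lemma cdfAt_mono (G : Measure ℝ) [IsProbabilityMeasure G] : Monotone (cdfAt G) := by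
  rw [cdfAt_eq_cdf]; exact monotone_cdf G

lemma cdfAt_nonneg (G : Measure ℝ) (x : ℝ) : 0 ≤ cdfAt G x := ENNReal.toReal_nonneg

lemma cdfAt_le_one (G : Measure ℝ) [IsProbabilityMeasure G] (x : ℝ) : cdfAt G x ≤ 1 := by
  rw [cdfAt_eq_cdf]; exact cdf_le_one G x

lemma toReal_Ioc (a y : ℝ) (hay : a ≤ y) : (G (Ioc a y)).toReal = cdfAt G y - cdfAt G a := by
  have hu : Iic a ∪ Ioc a y = Iic y := Iic_union_Ioc_eq_Iic hay
  have hd : Disjoint (Iic a) (Ioc a y) := Iic_disjoint_Ioc le_rfl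
  have := measure_union (μ := G) hd measurableSet_Ioc
  rw [hu] at this
  have h1 : (G (Iic y)).toReal = (G (Iic a)).toReal + (G (Ioc a y)).toReal := by
    rw [this, ENNReal.toReal_add (measure_ne_top _ _) (measure_ne_top _ _)]
  simp only [cdfAt]; linarith

lemma singleton_null (hcont : Continuous (cdfAt G)) (y : ℝ) : G {y} = 0 := by
  have key : ∀ n : ℕ, (G {y}).toReal ≤ cdfAt G y - cdfAt G (y - ((n:ℝ)+1)⁻¹) := by
    intro n
    have hpos : (0:ℝ) < ((n:ℝ)+1)⁻¹ := by positivity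
    have h1 : G {y} ≤ G (Ioc (y - ((n:ℝ)+1)⁻¹) y) := by
      apply measure_mono; intro x hx
      rcases hx with rfl; exact ⟨by linarith, le_rfl⟩
    have h2 := toReal_Ioc (G := G) (y - ((n:ℝ)+1)⁻¹) y (by linarith)
    rw [← h2]
    exact ENNReal.toReal_mono (measure_ne_top _ _) h1
  have hlim : Tendsto (fun n : ℕ => cdfAt G y - cdfAt G (y - ((n:ℝ)+1)⁻¹)) atTop (𝓝 0) := by
    have h1 : Tendsto (fun n : ℕ => y - ((n:ℝ)+1)⁻¹) atTop (𝓝 y) := by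
      have := tendsto_one_div_add_atTop_nhds_zero_nat (𝕜 := ℝ)
      simpa [one_div] using tendsto_const_nhds.sub this
    have h2 := (hcont.continuousAt (x := y)).tendsto.comp h1
    have h3 := (tendsto_const_nhds (x := cdfAt G y) (f := atTop (α := ℕ))).sub h2
    simpa using h3
  have h0 : (G {y}).toReal ≤ 0 := le_of_tendsto_of_tendsto' tendsto_const_nhds hlim key
  have := ENNReal.toReal_nonneg (a := G {y})
  have : (G {y}).toReal = 0 := le_antisymm h0 this
  rwa [ENNReal.toReal_eq_zero_iff, or_iff_left (measure_ne_top _ _)] at this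

lemma cdfLt_eq_cdfAt (hcont : Continuous (cdfAt G)) (y : ℝ) : cdfLt G y = cdfAt G y := by
  unfold cdfLt cdfAt
  rw [measure_congr (Iio_ae_eq_Iic' (singleton_null hcont y))]
end analytic

section quant
variable {G : Measure ℝ} [IsProbabilityMeasure G] {S : Set ℝ} {α : ℝ}

lemma qset_nonempty (hα1 : α < 1) : {x : ℝ | α ≤ cdfAt G x}.Nonempty := by
  have htop : Tendsto (cdfAt G) atTop (𝓝 1) := by rw [cdfAt_eq_cdf]; exact tendsto_cdf_atTop G
  exact (htop.eventually (eventually_ge_nhds hα1)).exists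

lemma exists_cdf_lt (hα0 : 0 < α) : ∃ M : ℝ, cdfAt G M < α := by
  have hbot : Tendsto (cdfAt G) atBot (𝓝 0) := by rw [cdfAt_eq_cdf]; exact tendsto_cdf_atBot G
  exact (hbot.eventually (eventually_lt_nhds hα0)).exists

lemma qset_bddBelow (hα0 : 0 < α) : BddBelow {x : ℝ | α ≤ cdfAt G x} := by
  obtain ⟨M, hM⟩ := exists_cdf_lt (G := G) hα0
  refine ⟨M, fun x hx => ?_⟩
  by_contra h
  push_neg at h
  exact absurd (le_trans hx (cdfAt_mono G h.le)) (not_le.mpr hM)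

lemma cdfAt_lowerQuantile (hcont : Continuous (cdfAt G)) (hα : α ∈ Ioo (0:ℝ) 1) :
    cdfAt G (lowerQuantile G α) = α := by
  obtain ⟨hα0, hα1⟩ := hα
  have hclosed : IsClosed {x : ℝ | α ≤ cdfAt G x} := isClosed_le continuous_const hcont
  have hne := qset_nonempty (G := G) hα1
  have hbdd := qset_bddBelow (G := G) hα0
  have hmem : lowerQuantile G α ∈ {x : ℝ | α ≤ cdfAt G x} := hclosed.csInf_mem hne hbdd
  refine le_antisymm ?_ hmem
  by_contra h
  push_neg at h
  obtain ⟨M, hM⟩ := exists_cdf_lt (G := G) hα0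
  set q := lowerQuantile G α with hq
  set M' := min M (q - 1) with hM'
  have hM'q : M' ≤ q := le_trans (min_le_right _ _) (by linarith)
  have hM'lt : cdfAt G M' < α := lt_of_le_of_lt (cdfAt_mono G (min_le_left _ _)) hM
  have hIVT := intermediate_value_Icc hM'q (hcont.continuousOn (s := Icc M' q))
  have hαIcc : α ∈ Icc (cdfAt G M') (cdfAt G q) := ⟨hM'lt.le, h.le⟩
  obtain ⟨x, hxIcc, hxα⟩ := hIVT hαIcc
  have hqx : q ≤ x := csInf_le hbdd (le_of_eq hxα.symm)
  have : x = q := le_antisymm hxIcc.2 hqx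
  rw [this] at hxα
  exact absurd hxα.symm (ne_of_lt h)

lemma level_unique (hord : S.OrdConnected) (hmono : StrictMonoOn (cdfAt G) S)
    (hSc : G Sᶜ = 0) (hα : α ∈ Ioo (0:ℝ) 1) {a b : ℝ}
    (ha : cdfAt G a = α) (hb : cdfAt G b = α) : a = b := by
  have aux : ∀ a b : ℝ, a < b → cdfAt G a = α → cdfAt G b = α → False := by
    intro a b hab ha hb
    have hSa : (Iic a ∩ S).Nonempty := by
      apply nonempty_of_measure_ne_zero (μ := G)
      intro h0
      have hsub : Iic a ⊆ (Iic a ∩ S) ∪ Sᶜ := by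
        intro x hx
        by_cases hxS : x ∈ S
        · exact Or.inl ⟨hx, hxS⟩
        · exact Or.inr hxS
      have : G (Iic a) = 0 := le_antisymm
        (le_trans (measure_mono hsub)
          (le_trans (measure_union_le _ _) (by rw [h0, hSc]; simp))) zero_le
      rw [cdfAt, this] at ha
      simp at ha
      linarith [hα.1]
    have hSb : (Ioi b ∩ S).Nonempty := by
      apply nonempty_of_measure_ne_zero (μ := G)
      intro h0
      have hsub : Ioi b ⊆ (Ioi b ∩ S) ∪ Sᶜ := by
        intro x hx
        by_cases hxS : x ∈ S
        · exact Or.inl ⟨hx, hxS⟩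
        · exact Or.inr hxS
      have hb0 : G (Ioi b) = 0 := le_antisymm
        (le_trans (measure_mono hsub)
          (le_trans (measure_union_le _ _) (by rw [h0, hSc]; simp))) zero_le
      have hcompl : G (Iic b)ᶜ = 1 - G (Iic b) := prob_compl_eq_one_sub measurableSet_Iic
      rw [compl_Iic] at hcompl
      rw [hb0] at hcompl
      have : G (Iic b) = 1 := by
        have hle : G (Iic b) ≤ 1 := prob_le_one
        rcases lt_or_eq_of_le hle with h | h
        · exact absurd hcompl.symm (by simp [tsub_eq_zero_iff_le, not_le.mpr h])
        · exact h
      rw [cdfAt, this] at hb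
      simp at hb
      linarith [hα.2]
    obtain ⟨s, hsa, hsS⟩ := hSa
    obtain ⟨s', hs'b, hs'S⟩ := hSb
    have hsa' : s ≤ a := hsa
    have hs'b' : b < s' := hs'b
    have hz1S : a + (b - a)/3 ∈ S := hord.out hsS hs'S ⟨by linarith, by linarith⟩
    have hz2S : b - (b - a)/3 ∈ S := hord.out hsS hs'S ⟨by linarith, by linarith⟩
    have h12 : cdfAt G (a + (b - a)/3) < cdfAt G (b - (b - a)/3) :=
      hmono hz1S hz2S (by linarith)
    have h1 : cdfAt G a ≤ cdfAt G (a + (b - a)/3) := cdfAt_mono G (by linarith)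
    have h2 : cdfAt G (b - (b - a)/3) ≤ cdfAt G b := cdfAt_mono G (by linarith)
    linarith
  rcases lt_trichotomy a b with h | h | h
  · exact absurd (aux a b h ha hb) not_false
  · exact h
  · exact absurd (aux b a h hb ha) not_false
end quant

section quant2
variable {G : Measure ℝ} [IsProbabilityMeasure G] {S : Set ℝ} {α : ℝ}

lemma lowerQuantile_eq_iff (hcont : Continuous (cdfAt G)) (hord : S.OrdConnected)
    (hmono : StrictMonoOn (cdfAt G) S) (hSc : G Sᶜ = 0) (hα : α ∈ Ioo (0:ℝ) 1) (t : ℝ) :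
    lowerQuantile G α = t ↔ cdfAt G t = α := by
  constructor
  · rintro rfl; exact cdfAt_lowerQuantile hcont hα
  · intro ht
    exact level_unique hord hmono hSc hα (cdfAt_lowerQuantile hcont hα) ht

lemma cdfAt_le_iff (hcont : Continuous (cdfAt G)) (hord : S.OrdConnected)
    (hmono : StrictMonoOn (cdfAt G) S) (hSc : G Sᶜ = 0) (hα : α ∈ Ioo (0:ℝ) 1) (y : ℝ) :
    cdfAt G y ≤ α ↔ y ≤ lowerQuantile G α := by
  have hq := cdfAt_lowerQuantile (G := G) hcont hα
  constructor
  · intro hy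
    by_contra h
    push_neg at h
    have h1 : α ≤ cdfAt G y := hq ▸ cdfAt_mono G h.le
    have h2 : cdfAt G y = α := le_antisymm hy h1
    exact absurd (level_unique hord hmono hSc hα h2 hq) (ne_of_gt h)
  · intro hy
    exact hq ▸ cdfAt_mono G hy

lemma upperQuantile_eq_lower (hcont : Continuous (cdfAt G)) (hord : S.OrdConnected)
    (hmono : StrictMonoOn (cdfAt G) S) (hSc : G Sᶜ = 0) (hα : α ∈ Ioo (0:ℝ) 1) :
    upperQuantile G α = lowerQuantile G α := by
  have hset : {x : ℝ | cdfLt G x ≤ α} = Iic (lowerQuantile G α) := by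
    ext y
    rw [Set.mem_setOf_eq, cdfLt_eq_cdfAt hcont]
    exact cdfAt_le_iff hcont hord hmono hSc hα y
  rw [upperQuantile, hset, csSup_Iic]
end quant2

section meas
variable {F : Ω → Measure ℝ} {Y : Ω → ℝ}

lemma Iic_eq_iInter (y : ℝ) : Iic y = ⋂ n : ℕ, Iic (y + ((n:ℝ)+1)⁻¹) := by
  ext x
  simp only [mem_Iic, mem_iInter]
  constructor
  · intro h n
    have : (0:ℝ) < ((n:ℝ)+1)⁻¹ := by positivity
    linarith
  · intro h
    by_contra hx
    push_neg at hx
    obtain ⟨n, hn⟩ := exists_nat_one_div_lt (by linarith : (0:ℝ) < x - y)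
    have := h n
    rw [one_div] at hn
    linarith

lemma measure_Iic_apply_eq (hprob : ∀ ω, IsProbabilityMeasure (F ω)) (ω : Ω) :
    F ω (Iic (Y ω)) = ⨅ q : ℚ, (if Y ω < (q:ℝ) then F ω (Iic (q:ℝ)) else ⊤) := by
  haveI := hprob ω
  apply le_antisymm
  · refine le_iInf fun q => ?_
    split_ifs with h
    · exact measure_mono (Iic_subset_Iic.mpr h.le)
    · exact le_top
  · have hIic : F ω (Iic (Y ω)) = ⨅ n : ℕ, F ω (Iic (Y ω + ((n:ℝ)+1)⁻¹)) := by
      rw [Iic_eq_iInter (Y ω)]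
      refine Directed.measure_iInter (fun n => measurableSet_Iic.nullMeasurableSet) ?_
        ⟨0, measure_ne_top _ _⟩
      intro m n
      rcases le_total m n with h | h
      · exact ⟨n, fun x hx => by
          simp only [mem_Iic] at hx ⊢
          have hmn : (m:ℝ) ≤ (n:ℝ) := Nat.cast_le.mpr h
          have : ((n:ℝ)+1)⁻¹ ≤ ((m:ℝ)+1)⁻¹ := by
            apply inv_anti₀ (by positivity); linarith
          linarith, fun x hx => hx⟩
      · exact ⟨m, fun x hx => hx, fun x hx => by
          simp only [mem_Iic] at hx ⊢
          have hmn : (n:ℝ) ≤ (m:ℝ) := Nat.cast_le.mpr h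
          have : ((m:ℝ)+1)⁻¹ ≤ ((n:ℝ)+1)⁻¹ := by
            apply inv_anti₀ (by positivity); linarith
          linarith⟩
    rw [hIic]
    refine le_iInf fun n => ?_
    obtain ⟨q, hq1, hq2⟩ := exists_rat_btwn (by linarith [inv_pos.mpr (by positivity : (0:ℝ) < (n:ℝ)+1)] : Y ω < Y ω + ((n:ℝ)+1)⁻¹)
    refine le_trans (iInf_le _ q) ?_
    rw [if_pos hq1]
    exact measure_mono (Iic_subset_Iic.mpr hq2.le)

lemma measurable_cdfAt_comp (measF : Measurable F) (measY : Measurable Y)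
    (hprob : ∀ ω, IsProbabilityMeasure (F ω)) :
    Measurable (fun ω => cdfAt (F ω) (Y ω)) := by
  have : (fun ω => F ω (Iic (Y ω)))
      = fun ω => ⨅ q : ℚ, (if Y ω < (q:ℝ) then F ω (Iic (q:ℝ)) else ⊤) := by
    ext ω; exact measure_Iic_apply_eq hprob ω
  apply ENNReal.measurable_toReal.comp
  rw [show (fun ω => F ω (Iic (Y ω))) = _ from this]
  refine Measurable.iInf fun q => Measurable.ite (measY measurableSet_Iio) ?_ measurable_const
  exact (Measure.measurable_coe measurableSet_Iic).comp measF

lemma measure_Iio_apply_eq (ω : Ω) :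
    F ω (Iio (Y ω)) = ⨆ q : ℚ, (if (q:ℝ) < Y ω then F ω (Iic (q:ℝ)) else 0) := by
  apply le_antisymm
  · have hset : Iio (Y ω) = ⋃ q : ℚ, (if (q:ℝ) < Y ω then Iic (q:ℝ) else ∅) := by
      ext x
      simp only [mem_Iio, mem_iUnion]
      constructor
      · intro h
        obtain ⟨q, hq1, hq2⟩ := exists_rat_btwn h
        exact ⟨q, by rw [if_pos hq2]; exact mem_Iic.mpr hq1.le⟩
      · rintro ⟨q, hq⟩
        split_ifs at hq with h
        · exact lt_of_le_of_lt (mem_Iic.mp hq) h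
        · exact absurd hq (notMem_empty x)
    rw [hset]
    have hdir : Directed (· ⊆ ·) (fun q : ℚ => (if (q:ℝ) < Y ω then Iic (q:ℝ) else ∅)) := by
      intro q1 q2
      by_cases h1 : (q1:ℝ) < Y ω
      · by_cases h2 : (q2:ℝ) < Y ω
        · have hmax : ((max q1 q2 : ℚ):ℝ) < Y ω := by
            rcases max_cases q1 q2 with ⟨h, _⟩ | ⟨h, _⟩ <;> rw [h] <;> assumption
          refine ⟨max q1 q2, ?_, ?_⟩
          · simp only [if_pos h1, if_pos hmax]
            exact Iic_subset_Iic.mpr (by exact_mod_cast le_max_left q1 q2)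
          · simp only [if_pos h2, if_pos hmax]
            exact Iic_subset_Iic.mpr (by exact_mod_cast le_max_right q1 q2)
        · refine ⟨q1, subset_rfl, ?_⟩
          simp only [if_neg h2]
          exact empty_subset _
      · refine ⟨q2, ?_, subset_rfl⟩
        simp only [if_neg h1]
        exact empty_subset _
    rw [Directed.measure_iUnion hdir]
    refine iSup_mono fun q => ?_
    split_ifs
    · exact le_rfl
    · simp
  · refine iSup_le fun q => ?_
    split_ifs with h
    · exact measure_mono (fun x hx => lt_of_le_of_lt (mem_Iic.mp hx) h)
    · simp
end meas

section meas2
variable {F : Ω → Measure ℝ} {Y U : Ω → ℝ}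

lemma measurable_cdfLt_comp (measF : Measurable F) (measY : Measurable Y) :
    Measurable (fun ω => cdfLt (F ω) (Y ω)) := by
  have heq : (fun ω => F ω (Iio (Y ω)))
      = fun ω => ⨆ q : ℚ, (if (q:ℝ) < Y ω then F ω (Iic (q:ℝ)) else 0) := by
    ext ω; exact measure_Iio_apply_eq ω
  apply ENNReal.measurable_toReal.comp
  rw [show (fun ω => F ω (Iio (Y ω))) = _ from heq]
  refine Measurable.iSup fun q => Measurable.ite (measY measurableSet_Ioi) ?_ measurable_const
  exact (Measure.measurable_coe measurableSet_Iic).comp measF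

lemma measurable_PIT (measF : Measurable F) (measY : Measurable Y) (measU : Measurable U)
    (hprob : ∀ ω, IsProbabilityMeasure (F ω)) :
    Measurable (PIT F Y U) := by
  have h1 := measurable_cdfLt_comp measF measY (F := F)
  have h2 := measurable_cdfAt_comp measF measY hprob
  exact h1.add (measU.mul (h2.sub h1))
end meas2

section condexp
variable {μ : Measure Ω} [IsProbabilityMeasure μ]

lemma condexp_of_countable_fibers {β : Type*} [MeasurableSpace β] [MeasurableSingletonClass β]
    (X : Ω → β) (hX : Measurable X)
    (V : Set β) (hVc : V.Countable) (hXV : ∀ᵐ ω ∂μ, X ω ∈ V)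
    (f : Ω → ℝ) (hf : Integrable f μ) (g : β → ℝ) (hg : Measurable g)
    (hgX : Integrable (fun ω => g (X ω)) μ)
    (heq : ∀ v ∈ V, ∫ ω in X ⁻¹' {v}, f ω ∂μ = g v * (μ (X ⁻¹' {v})).toReal) :
    μ[f | MeasurableSpace.comap X inferInstance] =ᵐ[μ] fun ω => g (X ω) := by
  have hm : MeasurableSpace.comap X inferInstance ≤ (inferInstance : MeasurableSpace Ω) :=
    hX.comap_le
  haveI : SigmaFinite (μ.trim hm) := by
    have : IsFiniteMeasure (μ.trim hm) := isFiniteMeasure_trim hm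
    infer_instance
  have key : ∀ B : Set β, MeasurableSet B →
      ∫ ω in X ⁻¹' B, g (X ω) ∂μ = ∫ ω in X ⁻¹' B, f ω ∂μ := by
    intro B hB
    have hae : X ⁻¹' B =ᵐ[μ] X ⁻¹' (B ∩ V) := by
      rw [Filter.eventuallyEq_set]
      filter_upwards [hXV] with ω hω
      simp only [mem_preimage, mem_inter_iff]
      tauto
    rw [setIntegral_congr_set hae, setIntegral_congr_set hae]
    haveI : Countable ↥(B ∩ V) := (hVc.mono inter_subset_right).to_subtype
    have hunion : X ⁻¹' (B ∩ V) = ⋃ v : ↥(B ∩ V), X ⁻¹' {(v : β)} := by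
      rw [← preimage_iUnion]
      congr 1
      ext x
      simp
    have hmeas : ∀ v : ↥(B ∩ V), MeasurableSet (X ⁻¹' {(v : β)}) :=
      fun v => hX (measurableSet_singleton _)
    have hdisj : Pairwise (Function.onFun Disjoint fun v : ↥(B ∩ V) => X ⁻¹' {(v : β)}) := by
      intro v w hvw
      refine Set.disjoint_left.mpr fun x hx hx' => ?_
      simp only [mem_preimage, mem_singleton_iff] at hx hx'
      exact hvw (Subtype.ext (hx ▸ hx'))
    rw [hunion, integral_iUnion hmeas hdisj (hgX.integrableOn),
      integral_iUnion hmeas hdisj (hf.integrableOn)]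
    congr 1
    ext v
    have hconst : ∫ ω in X ⁻¹' {(v : β)}, g (X ω) ∂μ = g v * (μ (X ⁻¹' {(v : β)})).toReal := by
      rw [setIntegral_congr_fun (hmeas v) (g := fun _ => g (v : β))
        (fun ω hω => by simp only [mem_preimage, mem_singleton_iff] at hω; rw [hω])]
      rw [setIntegral_const, smul_eq_mul, mul_comm, measureReal_def]
    rw [hconst, heq v v.2.2]
  symm
  refine ae_eq_condExp_of_forall_setIntegral_eq hm hf
    (fun s _ _ => hgX.integrableOn) ?_ ?_
  · rintro s ⟨B, hB, rfl⟩ _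
    exact key B hB
  · refine StronglyMeasurable.aestronglyMeasurable ?_
    exact Measurable.stronglyMeasurable (hg.comp (Measurable.of_comap_le le_rfl))

lemma fiber_integral_of_condexp {β : Type*} [MeasurableSpace β] [MeasurableSingletonClass β]
    {X : Ω → β} (hX : Measurable X) {f h : Ω → ℝ} (hf : Integrable f μ)
    (hcond : μ[f | MeasurableSpace.comap X inferInstance] =ᵐ[μ] h) (v : β) :
    ∫ ω in X ⁻¹' {v}, f ω ∂μ = ∫ ω in X ⁻¹' {v}, h ω ∂μ := by
  have hm : MeasurableSpace.comap X inferInstance ≤ (inferInstance : MeasurableSpace Ω) :=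
    hX.comap_le
  haveI : SigmaFinite (μ.trim hm) := by
    have : IsFiniteMeasure (μ.trim hm) := isFiniteMeasure_trim hm
    infer_instance
  have hs : MeasurableSet[MeasurableSpace.comap X inferInstance] (X ⁻¹' {v}) :=
    ⟨{v}, measurableSet_singleton v, rfl⟩
  rw [← setIntegral_condExp hm hf hs]
  exact setIntegral_congr_ae (hm _ hs) (hcond.mono fun ω hω _ => hω.symm) |>.symm

lemma ennreal_zero_of_le_ofReal {c : ENNReal}
    (h : ∀ α ∈ Ioo (0:ℝ) 1, c ≤ ENNReal.ofReal α) : c = 0 := by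
  refine le_antisymm ?_ zero_le
  refine ENNReal.le_of_forall_pos_le_add fun ε hε _ => ?_
  rw [zero_add]
  rcases le_or_gt 1 (ε : ENNReal) with h1 | h1
  · exact le_trans (le_trans (h (1/2) (by norm_num)) (by simp [ENNReal.ofReal_le_one])) h1
  · have hε' : (ε : ENNReal) ≠ ⊤ := ENNReal.coe_ne_top
    have hlt : (ε : ENNReal).toReal < 1 := by
      rw [← ENNReal.toReal_one]
      exact ENNReal.toReal_strict_mono ENNReal.one_ne_top h1
    have hpos : 0 < (ε : ENNReal).toReal := by
      simp only [ENNReal.coe_toReal]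
      exact hε
    calc c ≤ ENNReal.ofReal (ε : ENNReal).toReal := h _ ⟨hpos, hlt⟩
    _ = (ε : ENNReal) := ENNReal.ofReal_toReal hε'
end condexp


/-- **Theorem (Statement 5).** If all CDFs in the class `𝓕` (containing `F` almost surely)
are continuous and strictly increasing on a shared support interval, there is a countable
`𝓖 ⊆ 𝓕` with `Q(F ∈ 𝓖) = 1`, and Assumption (T) holds for all quantile and threshold
functionals, then CEP, quantile, and threshold calibration are all equivalent, and each
implies both probabilistic and marginal calibration. -/
theorem cep_quantile_threshold_equivalent
    {Ω : Type*} [MeasurableSpace Ω] (μ : Measure Ω) [IsProbabilityMeasure μ]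
    (F : Ω → Measure ℝ) (Y U : Ω → ℝ) (hps : IsPredictionSpace μ F Y U)
    (𝓕 : Set (Measure ℝ)) (hF𝓕 : ∀ᵐ ω ∂μ, F ω ∈ 𝓕)
    (hcsi : CSI 𝓕)
    (𝓖 : Set (Measure ℝ)) (h𝓖count : 𝓖.Countable) (h𝓖sub : 𝓖 ⊆ 𝓕)
    (hF𝓖 : ∀ᵐ ω ∂μ, F ω ∈ 𝓖)
    -- Assumption (T) for all quantile functionals:
    (hqmeas : ∀ α ∈ Set.Ioo (0:ℝ) 1, Measurable (qPairOf F α))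
    (hqcond : ∀ α ∈ Set.Ioo (0:ℝ) 1, ∀ᵐ ω ∂μ,
      condDistrib Y (qPairOf F α) μ (qPairOf F α ω) ∈ 𝓕)
    -- Assumption (T) for all threshold non-exceedance functionals:
    (htmeas : ∀ t : ℝ, Measurable (fun ω => cdfAt (F ω) t))
    (htcond : ∀ t : ℝ, ∀ᵐ ω ∂μ,
      condDistrib Y (fun ω' => cdfAt (F ω') t) μ (cdfAt (F ω) t) ∈ 𝓕) :
    ((CEPCalibrated μ F Y U ↔ QuantileCalibrated μ F Y) ∧
     (QuantileCalibrated μ F Y ↔ ThreshCalibrated μ F Y)) ∧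
    (CEPCalibrated μ F Y U → ProbCalibrated μ F Y U ∧ MargCalibrated μ F Y) := by
  classical
  obtain ⟨S, hSne, hSord, hS⟩ := hcsi
  have hprob := hps.probF
  have measY := hps.measY
  -- restrict to probability measures in 𝓖
  set 𝓖' : Set (Measure ℝ) := 𝓖 ∩ {G | IsProbabilityMeasure G} with h𝓖'def
  have h𝓖'c : 𝓖'.Countable := h𝓖count.mono inter_subset_left
  have hF𝓖' : ∀ᵐ ω ∂μ, F ω ∈ 𝓖' := hF𝓖.mono fun ω h => ⟨h, hprob ω⟩
  have h𝓖'F : 𝓖' ⊆ 𝓕 := fun G hG => h𝓖sub hG.1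
  -- measurability of the lower quantile
  have hqm : ∀ α ∈ Set.Ioo (0:ℝ) 1, Measurable (fun ω => lowerQuantile (F ω) α) :=
    fun α hα => measurable_fst.comp (hqmeas α hα)
  have hAmeas : ∀ α ∈ Set.Ioo (0:ℝ) 1,
      MeasurableSet {ω | Y ω ≤ lowerQuantile (F ω) α} :=
    fun α hα => measurableSet_le measY (hqm α hα)
  have hfint : ∀ α ∈ Set.Ioo (0:ℝ) 1,
      Integrable (Set.indicator {ω | Y ω ≤ lowerQuantile (F ω) α} fun _ => (1:ℝ)) μ :=
    fun α hα => (integrable_const (1:ℝ)).indicator (hAmeas α hα)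
  have htset : ∀ t : ℝ, MeasurableSet {ω | Y ω ≤ t} :=
    fun t => measurableSet_le measY measurable_const
  have htint : ∀ t : ℝ,
      Integrable (Set.indicator {ω | Y ω ≤ t} fun _ => (1:ℝ)) μ :=
    fun t => (integrable_const (1:ℝ)).indicator (htset t)
  -- pointwise comparison of PIT and quantile events
  have hiff : ∀ α ∈ Set.Ioo (0:ℝ) 1, ∀ᵐ ω ∂μ,
      (PIT F Y U ω ≤ α ↔ Y ω ≤ lowerQuantile (F ω) α) := by
    intro α hα
    filter_upwards [hF𝓕] with ω hω
    haveI := hprob ω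
    obtain ⟨hc, hmS, hsc⟩ := hS _ hω
    have hPITeq : PIT F Y U ω = cdfAt (F ω) (Y ω) := by
      unfold PIT; rw [cdfLt_eq_cdfAt hc]; ring
    rw [hPITeq]
    exact cdfAt_le_iff hc hSord hmS hsc hα (Y ω)
  have hindeq : ∀ α ∈ Set.Ioo (0:ℝ) 1,
      (Set.indicator {ω | PIT F Y U ω ≤ α} fun _ => (1:ℝ))
        =ᵐ[μ] Set.indicator {ω | Y ω ≤ lowerQuantile (F ω) α} fun _ => (1:ℝ) := by
    intro α hα
    filter_upwards [hiff α hα] with ω hω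
    simp only [Set.indicator_apply, Set.mem_setOf_eq, hω]
  -- P: CEP calibration reformulated with quantile events
  have hCEP_iff_P : CEPCalibrated μ F Y U ↔ ∀ α ∈ Set.Ioo (0:ℝ) 1,
      (μ[Set.indicator {ω | Y ω ≤ lowerQuantile (F ω) α} fun _ => (1:ℝ) |
        MeasurableSpace.comap (fun ω => lowerQuantile (F ω) α) inferInstance])
        =ᵐ[μ] fun _ => α := by
    constructor
    · intro h α hα
      exact (condExp_congr_ae (hindeq α hα)).symm.trans (h α hα)
    · intro h α hα
      exact (condExp_congr_ae (hindeq α hα)).trans (h α hα)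
  -- atoms of the lower-quantile fibration
  have hP_to_atom : ∀ α ∈ Set.Ioo (0:ℝ) 1,
      ((μ[Set.indicator {ω | Y ω ≤ lowerQuantile (F ω) α} fun _ => (1:ℝ) |
        MeasurableSpace.comap (fun ω => lowerQuantile (F ω) α) inferInstance])
        =ᵐ[μ] fun _ => α) → ∀ q : ℝ,
      ∫ ω in (fun ω => lowerQuantile (F ω) α) ⁻¹' {q},
          (Set.indicator {ω | Y ω ≤ lowerQuantile (F ω) α} fun _ => (1:ℝ)) ω ∂μ
        = α * (μ ((fun ω => lowerQuantile (F ω) α) ⁻¹' {q})).toReal := by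
    intro α hα h q
    rw [fiber_integral_of_condexp (hqm α hα) (hfint α hα) h q,
      setIntegral_const, smul_eq_mul, mul_comm, measureReal_def]
  -- total mass of quantile events
  have hP_total : ∀ α ∈ Set.Ioo (0:ℝ) 1,
      ((μ[Set.indicator {ω | Y ω ≤ lowerQuantile (F ω) α} fun _ => (1:ℝ) |
        MeasurableSpace.comap (fun ω => lowerQuantile (F ω) α) inferInstance])
        =ᵐ[μ] fun _ => α) →
      μ {ω | Y ω ≤ lowerQuantile (F ω) α} = ENNReal.ofReal α := by
    intro α hα h
    have hm : MeasurableSpace.comap (fun ω => lowerQuantile (F ω) α) inferInstance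
        ≤ (inferInstance : MeasurableSpace Ω) := (hqm α hα).comap_le
    haveI : SigmaFinite (μ.trim hm) := by
      have : IsFiniteMeasure (μ.trim hm) := isFiniteMeasure_trim hm
      infer_instance
    have h1 : ∫ ω, (Set.indicator {ω | Y ω ≤ lowerQuantile (F ω) α} fun _ => (1:ℝ)) ω ∂μ = α := by
      rw [← integral_condExp hm, integral_congr_ae h]
      simp
    have h2 : (μ {ω | Y ω ≤ lowerQuantile (F ω) α}).toReal = α := by
      have h1' : ∫ ω, ({ω | Y ω ≤ lowerQuantile (F ω) α}.indicator (1 : Ω → ℝ)) ω ∂μ = α := h1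
      rwa [integral_indicator_one (hAmeas α hα)] at h1'
    calc μ {ω | Y ω ≤ lowerQuantile (F ω) α}
        = ENNReal.ofReal (μ {ω | Y ω ≤ lowerQuantile (F ω) α}).toReal :=
          (ENNReal.ofReal_toReal (measure_ne_top μ _)).symm
      _ = ENNReal.ofReal α := by rw [h2]
  -- fiber identifications
  have hfiber : ∀ α ∈ Set.Ioo (0:ℝ) 1, ∀ q : ℝ,
      ((fun ω => cdfAt (F ω) q) ⁻¹' {α} : Set Ω)
        =ᵐ[μ] (fun ω => lowerQuantile (F ω) α) ⁻¹' {q} := by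
    intro α hα q
    rw [Filter.eventuallyEq_set]
    filter_upwards [hF𝓕] with ω hω
    haveI := hprob ω
    obtain ⟨hc, hmS, hsc⟩ := hS _ hω
    simp only [Set.mem_preimage, Set.mem_singleton_iff]
    exact (lowerQuantile_eq_iff hc hSord hmS hsc hα q).symm
  have hfiberPair : ∀ α ∈ Set.Ioo (0:ℝ) 1, ∀ q : ℝ,
      (qPairOf F α ⁻¹' {(q, q)} : Set Ω)
        =ᵐ[μ] (fun ω => lowerQuantile (F ω) α) ⁻¹' {q} := by
    intro α hα q
    rw [Filter.eventuallyEq_set]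
    filter_upwards [hF𝓕] with ω hω
    haveI := hprob ω
    obtain ⟨hc, hmS, hsc⟩ := hS _ hω
    simp only [Set.mem_preimage, Set.mem_singleton_iff, qPairOf, Prod.mk.injEq,
      upperQuantile_eq_lower hc hSord hmS hsc hα]
    tauto
  -- atoms imply P
  have hatom_to_P : ∀ α ∈ Set.Ioo (0:ℝ) 1,
      (∀ q : ℝ, ∫ ω in (fun ω => lowerQuantile (F ω) α) ⁻¹' {q},
          (Set.indicator {ω | Y ω ≤ lowerQuantile (F ω) α} fun _ => (1:ℝ)) ω ∂μ
        = α * (μ ((fun ω => lowerQuantile (F ω) α) ⁻¹' {q})).toReal) →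
      ((μ[Set.indicator {ω | Y ω ≤ lowerQuantile (F ω) α} fun _ => (1:ℝ) |
        MeasurableSpace.comap (fun ω => lowerQuantile (F ω) α) inferInstance])
        =ᵐ[μ] fun _ => α) := by
    intro α hα h
    exact condexp_of_countable_fibers (fun ω => lowerQuantile (F ω) α) (hqm α hα)
      ((fun G => lowerQuantile G α) '' 𝓖') (h𝓖'c.image _)
      (hF𝓖'.mono fun ω hω => ⟨F ω, hω, rfl⟩)
      _ (hfint α hα) (fun _ => α) measurable_const (integrable_const α)
      (fun v _ => h v)
  -- P' : conditioning on the quantile pair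
  have hatom_to_P' : ∀ α ∈ Set.Ioo (0:ℝ) 1,
      (∀ q : ℝ, ∫ ω in (fun ω => lowerQuantile (F ω) α) ⁻¹' {q},
          (Set.indicator {ω | Y ω ≤ lowerQuantile (F ω) α} fun _ => (1:ℝ)) ω ∂μ
        = α * (μ ((fun ω => lowerQuantile (F ω) α) ⁻¹' {q})).toReal) →
      ((μ[Set.indicator {ω | Y ω ≤ lowerQuantile (F ω) α} fun _ => (1:ℝ) |
        MeasurableSpace.comap (qPairOf F α) inferInstance]) =ᵐ[μ] fun _ => α) := by
    intro α hα h
    refine condexp_of_countable_fibers (qPairOf F α) (hqmeas α hα)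
      ((fun G => (lowerQuantile G α, upperQuantile G α)) '' 𝓖') (h𝓖'c.image _)
      (hF𝓖'.mono fun ω hω => ⟨F ω, hω, rfl⟩)
      _ (hfint α hα) (fun _ => α) measurable_const (integrable_const α) ?_
    rintro v ⟨G, hG, rfl⟩
    haveI : IsProbabilityMeasure G := hG.2
    obtain ⟨hc, hmS, hsc⟩ := hS _ (h𝓖'F hG)
    beta_reduce
    rw [upperQuantile_eq_lower hc hSord hmS hsc hα]
    rw [setIntegral_congr_set (hfiberPair α hα (lowerQuantile G α)),
      measure_congr (hfiberPair α hα (lowerQuantile G α))]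
    exact h _
  have hP'_to_atom : ∀ α ∈ Set.Ioo (0:ℝ) 1,
      ((μ[Set.indicator {ω | Y ω ≤ lowerQuantile (F ω) α} fun _ => (1:ℝ) |
        MeasurableSpace.comap (qPairOf F α) inferInstance]) =ᵐ[μ] fun _ => α) →
      ∀ q : ℝ, ∫ ω in (fun ω => lowerQuantile (F ω) α) ⁻¹' {q},
          (Set.indicator {ω | Y ω ≤ lowerQuantile (F ω) α} fun _ => (1:ℝ)) ω ∂μ
        = α * (μ ((fun ω => lowerQuantile (F ω) α) ⁻¹' {q})).toReal := by
    intro α hα h q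
    have h1 := fiber_integral_of_condexp (hqmeas α hα) (hfint α hα) h (q, q)
    rw [setIntegral_congr_set (hfiberPair α hα q)] at h1
    rw [h1, setIntegral_congr_set (hfiberPair α hα q), setIntegral_const,
      smul_eq_mul, mul_comm, measureReal_def]
  -- the condDistrib bridge
  have hbridge : ∀ α ∈ Set.Ioo (0:ℝ) 1,
      (μ[Set.indicator {ω | Y ω ≤ lowerQuantile (F ω) α} fun _ => (1:ℝ) |
        MeasurableSpace.comap (qPairOf F α) inferInstance]) =ᵐ[μ]
      fun ω => cdfAt (condDistrib Y (qPairOf F α) μ (qPairOf F α ω))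
        (lowerQuantile (F ω) α) := by
    intro α hα
    set ψ : (ℝ × ℝ) × ℝ → ℝ :=
      Set.indicator {p : (ℝ × ℝ) × ℝ | p.2 ≤ p.1.1} (fun _ => (1:ℝ)) with hψdef
    have hψm : StronglyMeasurable ψ := by
      refine (Measurable.indicator measurable_const ?_).stronglyMeasurable
      exact measurableSet_le measurable_snd (measurable_fst.comp measurable_fst)
    have hψeq : (fun a => ψ (qPairOf F α a, Y a))
        = Set.indicator {ω | Y ω ≤ lowerQuantile (F ω) α} (fun _ => (1:ℝ)) := by
      funext a
      by_cases h : Y a ≤ lowerQuantile (F a) α <;>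
        simp [hψdef, Set.indicator_apply, h, qPairOf]
    have hint : Integrable (fun a => ψ (qPairOf F α a, Y a)) μ := by
      rw [hψeq]; exact hfint α hα
    have h0 := condExp_prod_ae_eq_integral_condDistrib (hqmeas α hα)
      measY.aemeasurable hψm hint
    rw [hψeq] at h0
    refine h0.trans (Filter.EventuallyEq.of_eq ?_)
    funext ω
    have hinner : (fun y => ψ (qPairOf F α ω, y))
        = Set.indicator (Iic (lowerQuantile (F ω) α)) (1 : ℝ → ℝ) := by
      funext y
      by_cases h : y ≤ lowerQuantile (F ω) α <;>
        simp [hψdef, Set.indicator_apply, h, qPairOf]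
    rw [hinner, integral_indicator_one measurableSet_Iic]
    rfl
  -- Quantile calibration is equivalent to P'
  have hQ_iff_P' : QuantileCalibrated μ F Y ↔ (∀ α ∈ Set.Ioo (0:ℝ) 1,
      (μ[Set.indicator {ω | Y ω ≤ lowerQuantile (F ω) α} fun _ => (1:ℝ) |
        MeasurableSpace.comap (qPairOf F α) inferInstance]) =ᵐ[μ] fun _ => α) := by
    constructor
    · intro h α hα
      refine (hbridge α hα).trans ?_
      filter_upwards [h α hα, hqcond α hα] with ω h1 h3
      haveI : IsProbabilityMeasure (condDistrib Y (qPairOf F α) μ (qPairOf F α ω)) :=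
        inferInstance
      obtain ⟨hcκ, hmκ, hscκ⟩ := hS _ h3
      rw [← h1.1]
      exact cdfAt_lowerQuantile hcκ hα
    · intro h α hα
      have h2 := (hbridge α hα).symm.trans (h α hα)
      filter_upwards [h2, hF𝓕, hqcond α hα] with ω h1 hωF h3
      haveI := hprob ω
      haveI : IsProbabilityMeasure (condDistrib Y (qPairOf F α) μ (qPairOf F α ω)) :=
        inferInstance
      obtain ⟨hcκ, hmκ, hscκ⟩ := hS _ h3
      obtain ⟨hcF, hmF, hscF⟩ := hS _ hωF
      have hlow : lowerQuantile (condDistrib Y (qPairOf F α) μ (qPairOf F α ω)) α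
          = lowerQuantile (F ω) α :=
        (lowerQuantile_eq_iff hcκ hSord hmκ hscκ hα _).mpr h1
      refine ⟨hlow, ?_⟩
      rw [upperQuantile_eq_lower hcκ hSord hmκ hscκ hα,
        upperQuantile_eq_lower hcF hSord hmF hscF hα, hlow]
  -- threshold calibration gives atoms
  have hR_to_atom : ThreshCalibrated μ F Y → ∀ α ∈ Set.Ioo (0:ℝ) 1, ∀ q : ℝ,
      ∫ ω in (fun ω => lowerQuantile (F ω) α) ⁻¹' {q},
          (Set.indicator {ω | Y ω ≤ lowerQuantile (F ω) α} fun _ => (1:ℝ)) ω ∂μ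
        = α * (μ ((fun ω => lowerQuantile (F ω) α) ⁻¹' {q})).toReal := by
    intro h α hα q
    have h1 := fiber_integral_of_condexp (htmeas q) (htint q) (h q) α
    have hXfib : MeasurableSet ((fun ω => cdfAt (F ω) q) ⁻¹' {α}) :=
      htmeas q (measurableSet_singleton α)
    have h2 : ∫ ω in (fun ω => cdfAt (F ω) q) ⁻¹' {α}, cdfAt (F ω) q ∂μ
        = α * (μ ((fun ω => cdfAt (F ω) q) ⁻¹' {α})).toReal := by
      rw [setIntegral_congr_fun hXfib (g := fun _ => α) (fun ω hω => hω),
        setIntegral_const, smul_eq_mul, mul_comm, measureReal_def]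
    have h3 : ∫ ω in (fun ω => lowerQuantile (F ω) α) ⁻¹' {q},
        (Set.indicator {ω | Y ω ≤ lowerQuantile (F ω) α} fun _ => (1:ℝ)) ω ∂μ
        = ∫ ω in (fun ω => lowerQuantile (F ω) α) ⁻¹' {q},
          (Set.indicator {ω | Y ω ≤ q} fun _ => (1:ℝ)) ω ∂μ := by
      refine setIntegral_congr_fun ((hqm α hα) (measurableSet_singleton q)) ?_
      intro ω hω
      have hωq : lowerQuantile (F ω) α = q := hω
      by_cases hy : Y ω ≤ q <;> simp [Set.indicator_apply, hωq, hy]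
    rw [h3, ← setIntegral_congr_set (hfiber α hα q), h1, h2,
      measure_congr (hfiber α hα q)]
  -- P implies threshold calibration
  have hP_to_R : (∀ α ∈ Set.Ioo (0:ℝ) 1,
      (μ[Set.indicator {ω | Y ω ≤ lowerQuantile (F ω) α} fun _ => (1:ℝ) |
        MeasurableSpace.comap (fun ω => lowerQuantile (F ω) α) inferInstance])
        =ᵐ[μ] fun _ => α) → ThreshCalibrated μ F Y := by
    intro hP t
    have hXt : Measurable (fun ω => cdfAt (F ω) t) := htmeas t
    have hXtint : Integrable (fun ω => cdfAt (F ω) t) μ := by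
      refine Integrable.mono' (integrable_const (1:ℝ)) hXt.aestronglyMeasurable
        (Filter.Eventually.of_forall fun ω => ?_)
      haveI := hprob ω
      rw [Real.norm_eq_abs, abs_of_nonneg (cdfAt_nonneg _ _)]
      exact cdfAt_le_one _ _
    refine condexp_of_countable_fibers (fun ω => cdfAt (F ω) t) hXt
      ((fun G => cdfAt G t) '' 𝓖') (h𝓖'c.image _)
      (hF𝓖'.mono fun ω hω => ⟨F ω, hω, rfl⟩)
      _ (htint t) (fun x => x) measurable_id hXtint ?_
    rintro v ⟨G, hG, rfl⟩
    haveI : IsProbabilityMeasure G := hG.2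
    beta_reduce
    have hfib : MeasurableSet ((fun ω => cdfAt (F ω) t) ⁻¹' {cdfAt G t}) :=
      hXt (measurableSet_singleton _)
    have hind : ∫ ω in (fun ω => cdfAt (F ω) t) ⁻¹' {cdfAt G t},
        (Set.indicator {ω | Y ω ≤ t} fun _ => (1:ℝ)) ω ∂μ
        = (μ ({ω | Y ω ≤ t} ∩ (fun ω => cdfAt (F ω) t) ⁻¹' {cdfAt G t})).toReal := by
      have := integral_indicator_one (μ := μ.restrict ((fun ω => cdfAt (F ω) t) ⁻¹' {cdfAt G t}))
        (htset t)
      rw [measureReal_def, Measure.restrict_apply (htset t)] at this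
      exact this
    by_cases h01 : cdfAt G t ∈ Set.Ioo (0:ℝ) 1
    · -- generic level
      have h3 : ∫ ω in (fun ω => cdfAt (F ω) t) ⁻¹' {cdfAt G t},
          (Set.indicator {ω | Y ω ≤ t} fun _ => (1:ℝ)) ω ∂μ
          = ∫ ω in (fun ω => lowerQuantile (F ω) (cdfAt G t)) ⁻¹' {t},
            (Set.indicator {ω | Y ω ≤ lowerQuantile (F ω) (cdfAt G t)} fun _ => (1:ℝ)) ω ∂μ := by
        rw [setIntegral_congr_set (hfiber (cdfAt G t) h01 t)]
        refine setIntegral_congr_fun ((hqm (cdfAt G t) h01) (measurableSet_singleton t)) ?_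
        intro ω hω
        have hωq : lowerQuantile (F ω) (cdfAt G t) = t := hω
        by_cases hy : Y ω ≤ t <;> simp [Set.indicator_apply, hωq, hy]
      rw [h3, hP_to_atom (cdfAt G t) h01 (hP (cdfAt G t) h01) t,
        ← measure_congr (hfiber (cdfAt G t) h01 t)]
    · -- degenerate levels 0 and 1
      have hv0 : 0 ≤ cdfAt G t := cdfAt_nonneg _ _
      have hv1 : cdfAt G t ≤ 1 := cdfAt_le_one _ _
      have hcases : cdfAt G t = 0 ∨ cdfAt G t = 1 := by
        rcases not_and_or.mp h01 with h | h
        · exact Or.inl (le_antisymm (not_lt.mp h) hv0)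
        · exact Or.inr (le_antisymm hv1 (not_lt.mp h))
      rcases hcases with h0 | h0
      · -- level 0
        have hz : μ ({ω | Y ω ≤ t} ∩ (fun ω => cdfAt (F ω) t) ⁻¹' {cdfAt G t}) = 0 := by
          refine ennreal_zero_of_le_ofReal fun α' hα' => ?_
          have hle : ({ω | Y ω ≤ t} ∩ (fun ω => cdfAt (F ω) t) ⁻¹' {cdfAt G t} : Set Ω)
              ≤ᵐ[μ] ({ω | Y ω ≤ lowerQuantile (F ω) α'} : Set Ω) := by
            filter_upwards [hF𝓕] with ω hω hmem
            obtain ⟨hY', hfib'⟩ := hmem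
            haveI := hprob ω
            obtain ⟨hc, hmS, hsc⟩ := hS _ hω
            have hft : cdfAt (F ω) t = 0 := by
              have : cdfAt (F ω) t = cdfAt G t := hfib'
              rw [this, h0]
            have ht' : t ≤ lowerQuantile (F ω) α' := by
              refine (cdfAt_le_iff hc hSord hmS hsc hα' t).mp ?_
              rw [hft]; exact hα'.1.le
            exact le_trans hY' ht'
          calc μ ({ω | Y ω ≤ t} ∩ (fun ω => cdfAt (F ω) t) ⁻¹' {cdfAt G t})
              ≤ μ {ω | Y ω ≤ lowerQuantile (F ω) α'} := measure_mono_ae hle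
            _ = ENNReal.ofReal α' := hP_total α' hα' (hP α' hα')
        rw [hind, hz, h0]
        simp
      · -- level 1
        have hz : μ ((fun ω => cdfAt (F ω) t) ⁻¹' {cdfAt G t} \ {ω | Y ω ≤ t}) = 0 := by
          refine ennreal_zero_of_le_ofReal fun β hβ => ?_
          have hα' : (1 - β) ∈ Set.Ioo (0:ℝ) 1 := ⟨by linarith [hβ.2], by linarith [hβ.1]⟩
          have hle : ((fun ω => cdfAt (F ω) t) ⁻¹' {cdfAt G t} \ {ω | Y ω ≤ t} : Set Ω)
              ≤ᵐ[μ] ({ω | Y ω ≤ lowerQuantile (F ω) (1 - β)} : Set Ω)ᶜ := by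
            filter_upwards [hF𝓕] with ω hω hmem
            obtain ⟨hfib', hY'⟩ := hmem
            haveI := hprob ω
            have hft : cdfAt (F ω) t = 1 := by
              have : cdfAt (F ω) t = cdfAt G t := hfib'
              rw [this, h0]
            have ht' : lowerQuantile (F ω) (1 - β) ≤ t := by
              refine csInf_le (qset_bddBelow hα'.1) ?_
              show (1 - β) ≤ cdfAt (F ω) t
              rw [hft]; linarith [hβ.1]
            intro hcon
            exact hY' (le_trans hcon ht')
          calc μ ((fun ω => cdfAt (F ω) t) ⁻¹' {cdfAt G t} \ {ω | Y ω ≤ t})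
              ≤ μ ({ω | Y ω ≤ lowerQuantile (F ω) (1 - β)} : Set Ω)ᶜ := measure_mono_ae hle
            _ = 1 - ENNReal.ofReal (1 - β) := by
                rw [prob_compl_eq_one_sub (hAmeas (1 - β) hα'), hP_total (1 - β) hα' (hP (1 - β) hα')]
            _ = ENNReal.ofReal β := by
                rw [show (1:ENNReal) = ENNReal.ofReal (1:ℝ) by simp,
                  ← ENNReal.ofReal_sub (1:ℝ) (by linarith [hβ.2])]
                norm_num
        have hsplit : μ ((fun ω => cdfAt (F ω) t) ⁻¹' {cdfAt G t} ∩ {ω | Y ω ≤ t})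
            + μ ((fun ω => cdfAt (F ω) t) ⁻¹' {cdfAt G t} \ {ω | Y ω ≤ t})
            = μ ((fun ω => cdfAt (F ω) t) ⁻¹' {cdfAt G t}) :=
          measure_inter_add_diff _ (htset t)
        rw [hz, add_zero] at hsplit
        rw [hind, Set.inter_comm, hsplit, h0, one_mul]
  -- probabilistic calibration
  have hPITmeas : Measurable (PIT F Y U) :=
    measurable_PIT hps.measF measY hps.measU hprob
  have hProb : CEPCalibrated μ F Y U → ProbCalibrated μ F Y U := by
    intro hcep
    have hP := hCEP_iff_P.mp hcep
    have hkey : ∀ α ∈ Set.Ioo (0:ℝ) 1,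
        μ (PIT F Y U ⁻¹' Iic α) = ENNReal.ofReal α := by
      intro α hα
      have hset : (PIT F Y U ⁻¹' Iic α : Set Ω)
          =ᵐ[μ] {ω | Y ω ≤ lowerQuantile (F ω) α} := by
        rw [Filter.eventuallyEq_set]
        filter_upwards [hiff α hα] with ω hω
        exact hω
      rw [measure_congr hset]
      exact hP_total α hα (hP α hα)
    unfold ProbCalibrated
    haveI : IsProbabilityMeasure (μ.map (PIT F Y U)) :=
      Measure.isProbabilityMeasure_map hPITmeas.aemeasurable
    refine Measure.ext_of_Iic (μ.map (PIT F Y U)) unif01 fun a => ?_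
    rw [Measure.map_apply hPITmeas measurableSet_Iic]
    have hu : unif01 (Iic a) = volume (Iic a ∩ Icc (0:ℝ) 1) := by
      unfold unif01
      exact Measure.restrict_apply measurableSet_Iic
    rcases le_or_gt a 0 with ha | ha
    · have hL : μ (PIT F Y U ⁻¹' Iic a) = 0 := by
        refine ennreal_zero_of_le_ofReal fun α hα => ?_
        rw [← hkey α hα]
        exact measure_mono (preimage_mono (Iic_subset_Iic.mpr (le_trans ha hα.1.le)))
      have hR0 : volume (Iic a ∩ Icc (0:ℝ) 1) = 0 := by
        refine measure_mono_null (t := ({0} : Set ℝ)) (fun x hx => ?_) Real.volume_singleton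
        obtain ⟨hx1, hx2, _⟩ := hx
        have : x = 0 := le_antisymm (le_trans hx1 ha) hx2
        exact this
      rw [hL, hu, hR0]
    · rcases lt_or_ge a 1 with ha1 | ha1
      · rw [hkey a ⟨ha, ha1⟩, hu]
        have hseteq : Iic a ∩ Icc (0:ℝ) 1 = Icc 0 a := by
          ext x
          simp only [Set.mem_inter_iff, Set.mem_Iic, Set.mem_Icc]
          constructor
          · rintro ⟨h1, h2, _⟩; exact ⟨h2, h1⟩
          · rintro ⟨h1, h2⟩; exact ⟨h2, h1, by linarith⟩
        rw [hseteq, Real.volume_Icc, sub_zero]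
      · have hcompl : μ (PIT F Y U ⁻¹' Iic a)ᶜ = 0 := by
          refine ennreal_zero_of_le_ofReal fun β hβ => ?_
          have h1mb : (1 - β) ∈ Set.Ioo (0:ℝ) 1 := ⟨by linarith [hβ.2], by linarith [hβ.1]⟩
          have hsub : ((PIT F Y U ⁻¹' Iic a)ᶜ : Set Ω) ⊆ (PIT F Y U ⁻¹' Iic (1 - β))ᶜ :=
            compl_subset_compl.mpr
              (preimage_mono (Iic_subset_Iic.mpr (by linarith [hβ.1])))
          calc μ ((PIT F Y U ⁻¹' Iic a)ᶜ) ≤ μ ((PIT F Y U ⁻¹' Iic (1 - β))ᶜ) :=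
              measure_mono hsub
            _ = 1 - ENNReal.ofReal (1 - β) := by
                rw [prob_compl_eq_one_sub (hPITmeas measurableSet_Iic), hkey (1 - β) h1mb]
            _ = ENNReal.ofReal β := by
                rw [show (1:ENNReal) = ENNReal.ofReal (1:ℝ) by simp,
                  ← ENNReal.ofReal_sub (1:ℝ) (by linarith [hβ.2])]
                norm_num
        have hL : μ (PIT F Y U ⁻¹' Iic a) = 1 :=
          (prob_compl_eq_zero_iff (hPITmeas measurableSet_Iic)).mp hcompl
        have hseteq : Iic a ∩ Icc (0:ℝ) 1 = Icc 0 1 := by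
          ext x
          simp only [Set.mem_inter_iff, Set.mem_Iic, Set.mem_Icc]
          constructor
          · rintro ⟨_, h2, h3⟩; exact ⟨h2, h3⟩
          · rintro ⟨h1, h2⟩; exact ⟨by linarith, h1, h2⟩
        rw [hL, hu, hseteq, Real.volume_Icc]
        norm_num
  -- marginal calibration
  have hMarg : ThreshCalibrated μ F Y → MargCalibrated μ F Y := by
    intro hR y
    have hm : MeasurableSpace.comap (fun ω => cdfAt (F ω) y) inferInstance
        ≤ (inferInstance : MeasurableSpace Ω) := (htmeas y).comap_le
    haveI : SigmaFinite (μ.trim hm) := by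
      have : IsFiniteMeasure (μ.trim hm) := isFiniteMeasure_trim hm
      infer_instance
    have h1 : ∫ ω, cdfAt (F ω) y ∂μ
        = ∫ ω, (Set.indicator {ω | Y ω ≤ y} fun _ => (1:ℝ)) ω ∂μ := by
      rw [← integral_congr_ae (hR y), integral_condExp hm]
    have h2 : ∫ ω, ({ω | Y ω ≤ y}.indicator (1 : Ω → ℝ)) ω ∂μ
        = (μ {ω | Y ω ≤ y}).toReal := integral_indicator_one (htset y)
    exact h1.trans h2
  -- assembly
  have hCEP_to_Q : CEPCalibrated μ F Y U → QuantileCalibrated μ F Y := fun h =>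
    hQ_iff_P'.mpr fun α hα =>
      hatom_to_P' α hα (hP_to_atom α hα (hCEP_iff_P.mp h α hα))
  have hQ_to_CEP : QuantileCalibrated μ F Y → CEPCalibrated μ F Y U := fun h =>
    hCEP_iff_P.mpr fun α hα =>
      hatom_to_P α hα (hP'_to_atom α hα (hQ_iff_P'.mp h α hα))
  have hQ_to_R : QuantileCalibrated μ F Y → ThreshCalibrated μ F Y := fun h =>
    hP_to_R fun α hα => hatom_to_P α hα (hP'_to_atom α hα (hQ_iff_P'.mp h α hα))
  have hR_to_Q : ThreshCalibrated μ F Y → QuantileCalibrated μ F Y := fun h =>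
    hQ_iff_P'.mpr fun α hα => hatom_to_P' α hα (hR_to_atom h α hα)
  exact ⟨⟨⟨hCEP_to_Q, hQ_to_CEP⟩, ⟨hQ_to_R, hR_to_Q⟩⟩,
    fun h => ⟨hProb h, hMarg (hQ_to_R (hCEP_to_Q h))⟩⟩


end
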